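/- Let C > 0 be a real constant and let x : ℕ → ℝ be a sequence satisfying x_{n+2} = log(C + exp(2·x_{n+1})) − x_n for all n ≥ 0. Then, for arbitrary initial values x₀, x₁ ∈ ℝ, one has x_n → +∞ as n → ∞, and moreover x_{n+1}/x_n → 1. -/

import Mathlib

open Filter Real

/-- The log-dynamics of a cluster Dehn twist: if `C > 0` and `x` satisfies
`x_{n+2} = log(C + exp(2 x_{n+1})) − x_n`, then `x_n → +∞` and `x_{n+1}/x_n → 1`. -/
theorem cluster_Dehn_twist_log_dynamics (C : ℝ) (hC : 0 < C) (x : ℕ → ℝ)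
    (hrec : ∀ n, x (n + 2) = Real.log (C + Real.exp (2 * x (n + 1))) - x n) :
    Filter.Tendsto x Filter.atTop Filter.atTop ∧
    Filter.Tendsto (fun n => x (n + 1) / x n) Filter.atTop (nhds 1) := by
  set d : ℕ → ℝ := fun n => x (n + 1) - x n with hd_def
  set L : ℕ → ℝ := fun n => Real.log (1 + C * Real.exp (-(2 * x (n + 1)))) with hL_def
  have hLpos : ∀ n, 0 < L n := fun n =>
    Real.log_pos (by nlinarith [Real.exp_pos (-(2 * x (n + 1)))])
  have hd : ∀ n, d (n + 1) = d n + L n := by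
    intro n
    have key : Real.exp (2 * x (n + 1)) * (C * Real.exp (-(2 * x (n + 1)))) = C := by
      rw [mul_comm C, ← mul_assoc, ← Real.exp_add]
      simp
    have he : Real.exp (2 * x (n + 1)) * (1 + C * Real.exp (-(2 * x (n + 1))))
        = C + Real.exp (2 * x (n + 1)) := by
      rw [mul_add, mul_one, key]; ring
    have hlog : Real.log (C + Real.exp (2 * x (n + 1))) = 2 * x (n + 1) + L n := by
      rw [← he, Real.log_mul (Real.exp_ne_zero _)
        (by positivity), Real.log_exp]
    simp only [hd_def]
    rw [show n + 1 + 1 = n + 2 from rfl, hrec n, hlog]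
    ring
  have hdmono : StrictMono d := strictMono_nat_of_lt_succ fun n => by
    rw [hd n]; linarith [hLpos n]
  -- Step 1: some difference is positive
  have hstep1 : ∃ N, 0 < d N := by
    by_contra h
    push_neg at h
    have hxle : ∀ n, x n ≤ x 0 := by
      intro n
      induction n with
      | zero => exact le_refl _
      | succ k ih =>
        have := h k
        simp only [hd_def] at this
        linarith
    set ε := Real.log (1 + C * Real.exp (-(2 * x 0))) with hε
    have hεpos : 0 < ε := Real.log_pos (by nlinarith [Real.exp_pos (-(2 * x 0))])
    have hLge : ∀ n, ε ≤ L n := by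
      intro n
      have h1 : Real.exp (-(2 * x 0)) ≤ Real.exp (-(2 * x (n + 1))) :=
        Real.exp_le_exp.mpr (by linarith [hxle (n + 1)])
      have h2 : 1 + C * Real.exp (-(2 * x 0)) ≤ 1 + C * Real.exp (-(2 * x (n + 1))) := by
        nlinarith
      exact Real.log_le_log (by positivity) h2
    have hgrow : ∀ n : ℕ, d 0 + n * ε ≤ d n := by
      intro n
      induction n with
      | zero => simp
      | succ k ih =>
        rw [hd k]
        push_cast
        push_cast at ih
        linarith [hLge k]
    obtain ⟨n, hn⟩ := exists_nat_gt ((-(d 0)) / ε)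
    rw [div_lt_iff₀ hεpos] at hn
    have h1 := hgrow n
    have h2 := h n
    linarith
  obtain ⟨N, hδ⟩ := hstep1
  set δ := d N with hδ_def
  have hdge : ∀ n, N ≤ n → δ ≤ d n := fun n hn => hdmono.monotone hn
  -- Growth: x (N + k) ≥ x N + k δ
  have hgrow : ∀ k : ℕ, x N + k * δ ≤ x (N + k) := by
    intro k
    induction k with
    | zero => simp
    | succ k ih =>
      have h1 : δ ≤ d (N + k) := hdge _ (Nat.le_add_right _ _)
      have h2 : x (N + k + 1) = x (N + k) + d (N + k) := by
        simp only [hd_def]; ring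
      have : N + (k + 1) = N + k + 1 := rfl
      rw [this, h2]
      push_cast
      push_cast at ih
      linarith
  -- x tends to infinity
  have hx_top : Tendsto x atTop atTop := by
    have h1 : Tendsto (fun k : ℕ => x N + (k : ℝ) * δ) atTop atTop :=
      tendsto_atTop_add_const_left _ _ (tendsto_natCast_atTop_atTop.atTop_mul_const hδ)
    have h2 : Tendsto (fun k => x (N + k)) atTop atTop :=
      tendsto_atTop_mono hgrow h1
    have h3 : Tendsto (fun k => x (k + N)) atTop atTop := by
      simpa [add_comm] using h2
    exact (tendsto_add_atTop_iff_nat N).mp h3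
  -- Geometric bound on the increments beyond N
  set r := Real.exp (-(2 * δ)) with hr_def
  have hr0 : 0 < r := Real.exp_pos _
  have hr1 : r < 1 := Real.exp_lt_one_iff.mpr (by linarith)
  set E := C * Real.exp (-(2 * x N)) with hE_def
  have hE0 : 0 < E := by positivity
  set T := E * r / (1 - r) with hT_def
  have hT0 : 0 < T := by
    apply div_pos (by positivity)
    linarith
  have hLle : ∀ k : ℕ, L (N + k) ≤ E * r ^ (k + 1) := by
    intro k
    have hx1 : x N + (k + 1 : ℕ) * δ ≤ x (N + (k + 1)) := hgrow (k + 1)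
    have hexp : Real.exp (-(2 * x (N + k + 1)))
        ≤ Real.exp (-(2 * x N)) * r ^ (k + 1) := by
      rw [hr_def, ← Real.exp_nat_mul, ← Real.exp_add]
      apply Real.exp_le_exp.mpr
      push_cast
      push_cast at hx1
      have : N + (k + 1) = N + k + 1 := rfl
      rw [this] at hx1
      nlinarith
    have hlog : L (N + k) ≤ C * Real.exp (-(2 * x (N + k + 1))) := by
      have h1 : Real.log (1 + C * Real.exp (-(2 * x (N + k + 1))))
          ≤ (1 + C * Real.exp (-(2 * x (N + k + 1)))) - 1 :=
        Real.log_le_sub_one_of_pos (by positivity)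
      simpa using h1
    calc L (N + k) ≤ C * Real.exp (-(2 * x (N + k + 1))) := hlog
    _ ≤ C * (Real.exp (-(2 * x N)) * r ^ (k + 1)) := by nlinarith
    _ = E * r ^ (k + 1) := by rw [hE_def]; ring
  -- d is bounded above
  set B := d N + T with hB_def
  have hbd : ∀ k : ℕ, d (N + k) ≤ B - T * r ^ k := by
    intro k
    induction k with
    | zero => simp [hB_def]
    | succ k ih =>
      have h1 : d (N + k + 1) = d (N + k) + L (N + k) := hd (N + k)
      have h2 := hLle k
      have hTr : T * (1 - r) = E * r := by
        have hne : (1:ℝ) - r ≠ 0 := by linarith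
        rw [hT_def]
        exact div_mul_cancel₀ _ hne
      have hrk : (0:ℝ) ≤ r ^ k := le_of_lt (pow_pos hr0 k)
      have : N + (k + 1) = N + k + 1 := rfl
      rw [this, h1]
      have hstep : E * r ^ (k + 1) + T * r ^ (k + 1) ≤ T * r ^ k := by
        have : E * r ^ (k + 1) + T * r ^ (k + 1) = (E * r + T * r) * r ^ k := by ring
        nlinarith
      linarith
  have hbdd : BddAbove (Set.range d) := by
    refine ⟨B, ?_⟩
    rintro _ ⟨n, rfl⟩
    rcases le_or_gt n N with hn | hn
    · have h1 : d n ≤ d N := hdmono.monotone hn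
      have h2 : (0:ℝ) < T := hT0
      simp only [hB_def]
      linarith
    · obtain ⟨k, rfl⟩ := Nat.exists_eq_add_of_le hn.le
      have h1 := hbd k
      have h2 : (0:ℝ) ≤ T * r ^ k := by positivity
      linarith
  -- d converges
  set ℓ := ⨆ n, d n with hℓ_def
  have hdlim : Tendsto d atTop (nhds ℓ) := tendsto_atTop_ciSup hdmono.monotone hbdd
  -- ratio tends to 1
  have hdiv : Tendsto (fun n => d n / x n) atTop (nhds 0) := hdlim.div_atTop hx_top
  have h1 : Tendsto (fun n => 1 + d n / x n) atTop (nhds 1) := by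
    simpa using tendsto_const_nhds.add hdiv
  refine ⟨hx_top, ?_⟩
  have hx_ne : ∀ᶠ n in atTop, x n ≠ 0 :=
    (hx_top.eventually_gt_atTop 0).mono fun n h => h.ne'
  refine h1.congr' (hx_ne.mono fun n hn => ?_)
  simp only [hd_def]
  field_simp
  ring
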